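/- arXiv:1807.03931 — 2 statements merged into one kernel-verified Lean document; each statement's English description precedes it below -/
import Mathlib

section
/- Let X and Y be random variables whose joint density factorizes as p(x, y | θ) = p(x | θ) p(y | x), where θ ∈ Ω is a parameter, the support 𝒳 of X does not depend on θ, and the conditional density p(y | x) does not depend on θ (the Markov relationship θ → X → Y). For a fixed observation y with p(y | θ) = ∫_{𝒳} p(x | θ) p(y | x) dx > 0 for all θ ∈ Ω, define the observed-data log-likelihood l(θ) = log p(y | θ), the posterior p(x | y, θ) = p(x | θ) p(y | x) / p(y | θ), and the EM auxiliary function Q(θ | θ') = ∫_{𝒳} p(x | y, θ') log p(x | θ) dx (assumed finite). Then for any θ, θ^(t) ∈ Ω, if Q(θ | θ^(t)) ≥ Q(θ^(t) | θ^(t)), then l(θ) ≥ l(θ^(t)). -/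
open MeasureTheory Real

/-- **EM monotonicity (Theorem 1).** Under the Markov relationship θ → X → Y
(joint density `p(x, y | θ) = p(x | θ) p(y | x)`, with the support `S` of `X`
not depending on `θ` and `p(y | x)` not depending on `θ`), for a fixed
observation `y`, improving the EM auxiliary function `Q` never decreases the
observed-data log-likelihood `l`. -/
theorem em_monotonicity
    {X : Type*} [MeasurableSpace X] (μ : Measure X) [SigmaFinite μ]
    {Ω : Type*}
    -- `px θ x` is the density `p(x | θ)`; `py x` is `p(y | x)` for the fixed observation `y`
    (px : Ω → X → ℝ) (py : X → ℝ) (S : Set X)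
    (hpx_nonneg : ∀ θ x, 0 ≤ px θ x)
    (hpx_int : ∀ θ, Integrable (px θ) μ)
    (hpx_prob : ∀ θ, ∫ x, px θ x ∂μ = 1)
    -- the support of `X` does not depend on `θ`
    (hsupport : ∀ θ x, 0 < px θ x ↔ x ∈ S)
    (hpy_nonneg : ∀ x, 0 ≤ py x)
    -- the marginal likelihood `p(y | θ) = ∫ p(x | θ) p(y | x) dx`, assumed positive
    (pY : Ω → ℝ)
    (hpY_int : ∀ θ, Integrable (fun x => px θ x * py x) μ)
    (hpY : ∀ θ, pY θ = ∫ x, px θ x * py x ∂μ)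
    (hpY_pos : ∀ θ, 0 < pY θ)
    -- the observed-data log-likelihood
    (l : Ω → ℝ) (hl : ∀ θ, l θ = Real.log (pY θ))
    -- the posterior `p(x | y, θ)`
    (post : Ω → X → ℝ)
    (hpost : ∀ θ x, post θ x = px θ x * py x / pY θ)
    -- the EM auxiliary function `Q(θ | θ')`, assumed finite
    (Q : Ω → Ω → ℝ)
    (hQ_int : ∀ θ θ', Integrable (fun x => post θ' x * Real.log (px θ x)) μ)
    (hQ : ∀ θ θ', Q θ θ' = ∫ x, post θ' x * Real.log (px θ x) ∂μ)
    (θ θt : Ω)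
    (hQmono : Q θ θt ≥ Q θt θt) :
    l θ ≥ l θt := by
  have hpYt := hpY_pos θt
  have hpYθ := hpY_pos θ
  set c := pY θ / pY θt with hc_def
  have hc : 0 < c := div_pos hpYθ hpYt
  have hpost_nonneg : ∀ x, 0 ≤ post θt x := fun x => by
    rw [hpost]
    have := hpx_nonneg θt x; have := hpy_nonneg x
    positivity
  have hsupp : ∀ x, px θt x = 0 → px θ x = 0 := by
    intro x h
    by_contra h'
    have hpos : 0 < px θ x := lt_of_le_of_ne (hpx_nonneg θ x) (Ne.symm h')
    have hx : x ∈ S := (hsupport θ x).mp hpos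
    have := (hsupport θt x).mpr hx
    linarith
  -- pointwise identity: post θt x * (px θ x / px θt x) = px θ x * py x / pY θt
  have hpg : ∀ x, post θt x * (px θ x / px θt x) = px θ x * py x / pY θt := by
    intro x
    rcases eq_or_lt_of_le (hpx_nonneg θt x) with h0 | hpos
    · rw [hpost, ← h0, hsupp x h0.symm]; simp
    · rw [hpost]; field_simp
  have hint_pg : Integrable (fun x => post θt x * (px θ x / px θt x)) μ := by
    refine ((hpY_int θ).div_const (pY θt)).congr ?_
    filter_upwards with x using (hpg x).symm
  have hIpg : ∫ x, post θt x * (px θ x / px θt x) ∂μ = c := by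
    rw [integral_congr_ae (Filter.Eventually.of_forall hpg), integral_div, ← hpY]
  have hint_post : Integrable (post θt) μ := by
    refine ((hpY_int θt).div_const (pY θt)).congr ?_
    filter_upwards with x using (hpost θt x).symm
  have hIpost : ∫ x, post θt x ∂μ = 1 := by
    rw [integral_congr_ae (Filter.Eventually.of_forall (hpost θt)), integral_div, ← hpY,
      div_self hpYt.ne']
  -- pointwise identity for the log term
  have hlogg : ∀ x, post θt x * Real.log (px θ x / px θt x)
      = post θt x * Real.log (px θ x) - post θt x * Real.log (px θt x) := by
    intro x
    rcases eq_or_lt_of_le (hpx_nonneg θt x) with h0 | hpos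
    · have h1 : post θt x = 0 := by rw [hpost, ← h0]; simp
      simp [h1]
    · have hposθ : 0 < px θ x := (hsupport θ x).mpr ((hsupport θt x).mp hpos)
      rw [Real.log_div hposθ.ne' hpos.ne', mul_sub]
  have hint_logg : Integrable (fun x => post θt x * Real.log (px θ x / px θt x)) μ := by
    refine ((hQ_int θ θt).sub (hQ_int θt θt)).congr ?_
    filter_upwards with x using (hlogg x).symm
  have hIlogg : ∫ x, post θt x * Real.log (px θ x / px θt x) ∂μ = Q θ θt - Q θt θt := by
    rw [integral_congr_ae (Filter.Eventually.of_forall hlogg),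
      integral_sub (hQ_int θ θt) (hQ_int θt θt), hQ, hQ]
  -- pointwise Jensen-type bound using log t ≤ t - 1
  have hptwise : ∀ x, post θt x * Real.log (px θ x / px θt x)
      ≤ post θt x * (px θ x / px θt x) / c - post θt x + post θt x * Real.log c := by
    intro x
    rcases eq_or_lt_of_le (hpost_nonneg x) with h0 | hpos
    · rw [← h0]; simp
    · have hpxt : 0 < px θt x := by
        rcases eq_or_lt_of_le (hpx_nonneg θt x) with h0' | h
        · exfalso
          have : post θt x = 0 := by rw [hpost, ← h0']; simp
          linarith
        · exact h
      have hpxθ : 0 < px θ x := (hsupport θ x).mpr ((hsupport θt x).mp hpxt)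
      have hg : 0 < px θ x / px θt x := div_pos hpxθ hpxt
      have hle : Real.log (px θ x / px θt x / c) ≤ px θ x / px θt x / c - 1 :=
        Real.log_le_sub_one_of_pos (div_pos hg hc)
      rw [Real.log_div hg.ne' hc.ne'] at hle
      have h2 := mul_le_mul_of_nonneg_left hle (hpost_nonneg x)
      rw [mul_sub, mul_sub, mul_one] at h2
      rw [mul_div_assoc]
      linarith
  have hi1 : Integrable (fun x => post θt x * (px θ x / px θt x) / c - post θt x) μ := by
    exact (hint_pg.div_const c).sub hint_post
  have hi2 : Integrable (fun x => post θt x * Real.log c) μ := by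
    exact hint_post.mul_const _
  have hrhs_int : Integrable (fun x =>
      post θt x * (px θ x / px θt x) / c - post θt x + post θt x * Real.log c) μ := by
    exact hi1.add hi2
  have hIneq := integral_mono hint_logg hrhs_int hptwise
  have hIrhs : ∫ x, (post θt x * (px θ x / px θt x) / c - post θt x
      + post θt x * Real.log c) ∂μ = Real.log c := by
    rw [integral_add hi1 hi2, integral_sub (hint_pg.div_const c) hint_post,
      integral_div, hIpg, integral_mul_const, hIpost, div_self hc.ne']
    ring
  rw [hIlogg, hIrhs] at hIneq
  have hlc : Real.log c = l θ - l θt := by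
    rw [hl, hl, hc_def, Real.log_div hpYθ.ne' hpYt.ne']
  linarith
end

section
/- Let M ≥ 1, let B ∈ ℝ^{M×M} be a diagonal matrix with strictly positive diagonal entries, let β_y > 0, let 𝟙 ∈ ℝ^M be the all-ones vector, let F ∈ ℝ^M, y ∈ ℝ, and set s = β_y^{-1} + 𝟙ᵀ B^{-1} 𝟙. Then ( β_y 𝟙𝟙ᵀ + B )^{-1} ( β_y y 𝟙 + B F ) = F + ( (y − 𝟙ᵀ F) / s ) · B^{-1} 𝟙. -/
open Matrix

lemma vecMulVec_mulVec' {M : ℕ} (v w x : Fin M → ℝ) :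
    (vecMulVec v w) *ᵥ x = (w ⬝ᵥ x) • v := by
  ext i
  simp [mulVec, vecMulVec_apply, dotProduct, Finset.sum_mul, Finset.mul_sum]
  congr 1; ext j; ring

/-- **Closed form of the posterior mean of the hidden local targets (equation
(43)).** For a diagonal matrix `B` with positive diagonal, `β_y > 0`, `𝟙` the
all-ones vector, `F ∈ ℝ^M`, `y ∈ ℝ`, and `s = β_y⁻¹ + 𝟙ᵀB⁻¹𝟙`,
`(β_y 𝟙𝟙ᵀ + B)⁻¹ (β_y y 𝟙 + B F) = F + ((y − 𝟙ᵀF)/s) B⁻¹𝟙`. -/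
theorem hidden_target_posterior_mean
    {M : ℕ} (hM : 1 ≤ M)
    (d : Fin M → ℝ) (hd : ∀ m, 0 < d m)
    (B : Matrix (Fin M) (Fin M) ℝ) (hB : B = Matrix.diagonal d)
    (βy : ℝ) (hβy : 0 < βy)
    (ones : Fin M → ℝ) (hones : ones = fun _ => 1)
    (F : Fin M → ℝ) (y : ℝ)
    (s : ℝ) (hs : s = βy⁻¹ + ones ⬝ᵥ (B⁻¹ *ᵥ ones)) :
    (βy • vecMulVec ones ones + B)⁻¹ *ᵥ ((βy * y) • ones + B *ᵥ F) =
      F + ((y - ones ⬝ᵥ F) / s) • (B⁻¹ *ᵥ ones) := by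
  -- positive definiteness / invertibility facts
  have hBpd : B.PosDef := by rw [hB]; exact Matrix.PosDef.diagonal hd
  have hBunit : IsUnit B := hBpd.isUnit
  have hVps : (βy • vecMulVec ones ones).PosSemidef := by
    rw [Matrix.posSemidef_iff_dotProduct_mulVec]
    constructor
    · ext i j
      simp [Matrix.IsHermitian, conjTranspose_apply, vecMulVec_apply, mul_comm]
    · intro x
      have : (βy • vecMulVec ones ones) *ᵥ x = (βy * (ones ⬝ᵥ x)) • ones := by
        rw [Matrix.smul_mulVec, vecMulVec_mulVec', smul_smul]
      rw [this]
      simp only [dotProduct_smul, smul_eq_mul, RCLike.star_def]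
      have hx : star x ⬝ᵥ ones = ones ⬝ᵥ x := by
        simp [dotProduct, mul_comm]
      rw [hx]
      nlinarith [mul_self_nonneg (ones ⬝ᵥ x), hβy.le]
  have hApd : (βy • vecMulVec ones ones + B).PosDef := Matrix.PosDef.posSemidef_add hVps hBpd
  have hAunit : IsUnit (βy • vecMulVec ones ones + B) := hApd.isUnit
  -- key quantities
  set u : Fin M → ℝ := B⁻¹ *ᵥ ones with hu
  set t : ℝ := ones ⬝ᵥ u with ht
  have htnn : 0 ≤ t := by
    have hBinv : B⁻¹ = Matrix.diagonal (fun i => (d i)⁻¹) := by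
      refine Matrix.inv_eq_right_inv ?_
      rw [hB, Matrix.diagonal_mul_diagonal]
      rw [show (fun i => d i * (d i)⁻¹) = fun _ => (1:ℝ) from
        funext fun i => mul_inv_cancel₀ (hd i).ne', Matrix.diagonal_one]
    have : t = ∑ i, (d i)⁻¹ := by
      simp [ht, hu, hBinv, dotProduct, mulVec_diagonal, hones]
    rw [this]
    exact Finset.sum_nonneg fun i _ => (inv_nonneg.mpr (hd i).le)
  have hspos : 0 < s := by
    rw [hs]
    have : 0 < βy⁻¹ := inv_pos.mpr hβy
    linarith
  have hsne : s ≠ 0 := hspos.ne'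
  set c : ℝ := (y - ones ⬝ᵥ F) / s with hc
  -- B *ᵥ u = ones
  have hBu : B *ᵥ u = ones := by
    rw [hu, Matrix.mulVec_mulVec, Matrix.mul_nonsing_inv _ (Matrix.isUnit_iff_isUnit_det _ |>.mp hBunit), Matrix.one_mulVec]
  -- the forward computation
  have key : (βy • vecMulVec ones ones + B) *ᵥ (F + c • u) = (βy * y) • ones + B *ᵥ F := by
    rw [Matrix.add_mulVec, Matrix.mulVec_add, Matrix.mulVec_add,
      Matrix.smul_mulVec, Matrix.smul_mulVec,
      vecMulVec_mulVec', Matrix.mulVec_smul, vecMulVec_mulVec',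
      Matrix.mulVec_smul, hBu, ← ht]
    have hscal : βy * (ones ⬝ᵥ F) + (βy * (c * t) + c) = βy * y := by
      have : c * s = y - ones ⬝ᵥ F := div_mul_cancel₀ _ hsne
      have hst : s = βy⁻¹ + t := by rw [hs, ht]
      field_simp [hst] at this ⊢
      have h1 : βy * βy⁻¹ = 1 := mul_inv_cancel₀ hβy.ne'
      rw [hst] at this
      linear_combination βy * this - c * h1
    rw [show (βy * y) • ones + B *ᵥ F
        = (βy * (ones ⬝ᵥ F) + (βy * (c * t) + c)) • ones + B *ᵥ F from by rw [hscal]]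
    module
  -- conclude via invertibility
  haveI := hApd.isUnit.invertible
  rw [← key, Matrix.mulVec_mulVec, Matrix.nonsing_inv_mul _
    (Matrix.isUnit_iff_isUnit_det _ |>.mp hAunit), Matrix.one_mulVec]
end
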